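/- Let M ∈ Matrix (Fin n) (Fin n) ℂ, and let M̄₁, …, M̄_k ∈ Matrix (Fin n) (Fin n) ℂ be invertible matrices. Suppose real numbers b₁, …, b_k satisfy b_ℓ ≤ inf_{v ≠ 0} Re(v* M̄_ℓ* M v)/‖M̄_ℓ v‖₂² for each ℓ ∈ [k]. Then max_{ℓ ∈ [k]} b_ℓ · σ_min(M̄_ℓ) ≤ σ_min(M), where σ_min denotes the smallest singular value. -/
import Mathlib


open Matrix

/-- Euclidean (ℓ²) norm of a complex vector. -/
noncomputable def vecNorm {n : ℕ} (v : Fin n → ℂ) : ℝ :=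
  Real.sqrt (∑ i, ‖v i‖ ^ 2)

/-- Smallest singular value of a square complex matrix. -/
noncomputable def sigmaMin {n : ℕ} (M : Matrix (Fin n) (Fin n) ℂ) : ℝ :=
  ⨅ v : {v : Fin n → ℂ // vecNorm v = 1}, vecNorm (M.mulVec v.1)

lemma vecNorm_nonneg {n : ℕ} (v : Fin n → ℂ) : 0 ≤ vecNorm v := Real.sqrt_nonneg _

lemma sigmaMin_nonneg {n : ℕ} (M : Matrix (Fin n) (Fin n) ℂ) : 0 ≤ sigmaMin M :=
  Real.iInf_nonneg fun _ => vecNorm_nonneg _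

lemma vecNorm_pos {n : ℕ} {v : Fin n → ℂ} (hv : v ≠ 0) : 0 < vecNorm v := by
  apply Real.sqrt_pos.2
  rcases Function.ne_iff.1 hv with ⟨i, hi⟩
  have hni : 0 < ‖v i‖ := norm_pos_iff.2 hi
  have : (0:ℝ) < ‖v i‖ ^ 2 := by positivity
  exact this.trans_le (Finset.single_le_sum (f := fun i => ‖v i‖^2)
    (fun _ _ => by positivity) (Finset.mem_univ i))

lemma dot_eq {n : ℕ} (A B : Matrix (Fin n) (Fin n) ℂ) (v : Fin n → ℂ) :
    star v ⬝ᵥ (Aᴴ * B).mulVec v = star (A.mulVec v) ⬝ᵥ (B.mulVec v) := by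
  rw [← Matrix.mulVec_mulVec, Matrix.dotProduct_mulVec, ← Matrix.star_mulVec]

set_option maxHeartbeats 1000000

/-- The final NNSCM lower-bound prediction: if `b_ℓ` is a lower bound for the
linearized stability factor `inf_{v ≠ 0} Re(v* M̄_ℓ* M v)/‖M̄_ℓ v‖₂²` for each `ℓ`,
then `max_ℓ b_ℓ·σ_min(M̄_ℓ) ≤ σ_min(M)`. -/
theorem stmt12 {n k : ℕ} (hk : 0 < k) (M : Matrix (Fin n) (Fin n) ℂ)
    (Mb : Fin k → Matrix (Fin n) (Fin n) ℂ) (hMb : ∀ ℓ, IsUnit (Mb ℓ))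
    (b : Fin k → ℝ)
    (hb : ∀ ℓ, b ℓ ≤ ⨅ v : {v : Fin n → ℂ // v ≠ 0},
      (star v.1 ⬝ᵥ ((Mb ℓ)ᴴ * M).mulVec v.1).re / ∑ i, ‖(Mb ℓ).mulVec v.1 i‖ ^ 2) :
    (⨆ ℓ : Fin k, b ℓ * sigmaMin (Mb ℓ)) ≤ sigmaMin M := by
  have : Nonempty (Fin k) := ⟨⟨0, hk⟩⟩
  apply ciSup_le
  intro ℓ
  rcases le_or_gt (b ℓ) 0 with hbl | hbl
  · exact (mul_nonpos_of_nonpos_of_nonneg hbl (sigmaMin_nonneg _)).trans (sigmaMin_nonneg M)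
  · -- b ℓ > 0
    set f : {v : Fin n → ℂ // v ≠ 0} → ℝ := fun v =>
      (star v.1 ⬝ᵥ ((Mb ℓ)ᴴ * M).mulVec v.1).re / ∑ i, ‖(Mb ℓ).mulVec v.1 i‖ ^ 2 with hf
    by_cases hbdd : BddBelow (Set.range f)
    · by_cases hne : Nonempty {v : Fin n → ℂ // vecNorm v = 1}
      · rw [sigmaMin]
        apply le_ciInf
        rintro ⟨v, hv⟩
        have hvne : v ≠ 0 := by
          intro h
          rw [h] at hv
          simp [vecNorm] at hv
        have h1 : b ℓ ≤ f ⟨v, hvne⟩ := (hb ℓ).trans (ciInf_le hbdd ⟨v, hvne⟩)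
        set w := (Mb ℓ).mulVec v with hw
        set u := M.mulVec v with hu
        have hwne : w ≠ 0 := by
          intro h
          exact hvne ((Matrix.mulVec_injective_iff_isUnit.2 (hMb ℓ)) (by simp [← hw, h]))
        have hS : (0:ℝ) < ∑ i, ‖w i‖ ^ 2 := by
          have := vecNorm_pos hwne
          rw [vecNorm, Real.sqrt_pos] at this
          exact this
        have h2 : b ℓ * (∑ i, ‖w i‖ ^ 2) ≤ (star v ⬝ᵥ ((Mb ℓ)ᴴ * M).mulVec v).re := by
          rw [hf] at h1
          simp only at h1
          calc b ℓ * (∑ i, ‖w i‖ ^ 2)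
              ≤ ((star v ⬝ᵥ ((Mb ℓ)ᴴ * M).mulVec v).re / ∑ i, ‖w i‖ ^ 2) * (∑ i, ‖w i‖ ^ 2) := by
                exact mul_le_mul_of_nonneg_right h1 hS.le
            _ = _ := div_mul_cancel₀ _ hS.ne'
        have h3 : (star v ⬝ᵥ ((Mb ℓ)ᴴ * M).mulVec v).re ≤ vecNorm w * vecNorm u := by
          rw [dot_eq, ← hw, ← hu]
          have hre : (star w ⬝ᵥ u).re ≤ ∑ i, ‖w i‖ * ‖u i‖ := by
            rw [dotProduct, Complex.re_sum]
            apply Finset.sum_le_sum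
            intro i _
            calc ((star w) i * u i).re ≤ ‖(star w) i * u i‖ := Complex.re_le_norm _
              _ = ‖w i‖ * ‖u i‖ := by simp [norm_mul]
          refine hre.trans ?_
          exact Real.sum_mul_le_sqrt_mul_sqrt _ _ _
        have hW : 0 < vecNorm w := vecNorm_pos hwne
        have h4 : b ℓ * vecNorm w ≤ vecNorm u := by
          have hWsq : vecNorm w ^ 2 = ∑ i, ‖w i‖ ^ 2 :=
            Real.sq_sqrt (Finset.sum_nonneg fun _ _ => by positivity)
          have h6 : b ℓ * vecNorm w ^ 2 ≤ vecNorm w * vecNorm u := by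
            rw [hWsq]; exact h2.trans h3
          have h7 : vecNorm w * (b ℓ * vecNorm w) ≤ vecNorm w * vecNorm u := by
            calc vecNorm w * (b ℓ * vecNorm w) = b ℓ * vecNorm w ^ 2 := by ring
              _ ≤ _ := h6
          exact le_of_mul_le_mul_left h7 hW
        have h5 : sigmaMin (Mb ℓ) ≤ vecNorm w := by
          have hbdd2 : BddBelow (Set.range fun x : {v : Fin n → ℂ // vecNorm v = 1} =>
              vecNorm ((Mb ℓ).mulVec x.1)) := ⟨0, by rintro x ⟨y, rfl⟩; exact vecNorm_nonneg _⟩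
          exact ciInf_le hbdd2 ⟨v, hv⟩
        calc b ℓ * sigmaMin (Mb ℓ) ≤ b ℓ * vecNorm w :=
              mul_le_mul_of_nonneg_left h5 hbl.le
          _ ≤ vecNorm u := h4
      · -- no unit vectors: n = 0, sigmaMin M = 0, and also need b ℓ ≤ 0... contradiction?
        have hn : IsEmpty {v : Fin n → ℂ // vecNorm v = 1} := not_nonempty_iff.1 hne
        -- then n = 0, hence no nonzero vectors either, so iInf in hb is 0, b ℓ ≤ 0, contra hbl
        have hn0 : n = 0 := by
          by_contra h
          exact hne ⟨⟨fun i => if i = ⟨0, Nat.pos_of_ne_zero h⟩ then 1 else 0, by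
            rw [vecNorm]
            rw [show (∑ i : Fin n, ‖(if i = (⟨0, Nat.pos_of_ne_zero h⟩ : Fin n) then (1:ℂ) else 0)‖ ^ 2) = 1 by
              rw [Finset.sum_eq_single (⟨0, Nat.pos_of_ne_zero h⟩ : Fin n)] <;> simp +contextual]
            exact Real.sqrt_one⟩⟩
        subst hn0
        have : IsEmpty {v : Fin 0 → ℂ // v ≠ 0} := ⟨by rintro ⟨v, hv⟩; exact hv (by ext i; exact i.elim0)⟩
        have := (hb ℓ).trans_eq (Real.iInf_of_isEmpty _)
        linarith
    · have h0 : (⨅ v : {v : Fin n → ℂ // v ≠ 0}, f v) = 0 := by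
        rw [iInf, Real.sInf_of_not_bddBelow hbdd]
      have := (hb ℓ).trans_eq h0
      linarith
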